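/- Let C be a nonnegative random variable with E[C] finite and p ∈ (0,1]. Define T₁ = 0 and T_{L+1} = p·E[C] + (1−p)(E[C·1{C ≤ T_L}] + T_L·P(C > T_L)). Then for every L ≥ 1, T_L ≤ E[C]. -/

import Mathlib

open MeasureTheory

/-- The unlimited-cache proactive caching thresholds never exceed the expected
reactive cost `E[C]`. -/
theorem threshold_le_expected_cost
    {Ω : Type*} [MeasurableSpace Ω] (μ : Measure Ω) [IsProbabilityMeasure μ]
    (C : Ω → ℝ) (hCmeas : Measurable C) (hCnonneg : ∀ ω, 0 ≤ C ω)
    (hCint : Integrable C μ)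
    (p : ℝ) (hp : p ∈ Set.Ioc (0 : ℝ) 1)
    (T : ℕ → ℝ) (hT1 : T 1 = 0)
    (hTrec : ∀ L, 1 ≤ L →
      T (L + 1) = p * (∫ ω, C ω ∂μ) +
        (1 - p) * ((∫ ω in {ω | C ω ≤ T L}, C ω ∂μ)
          + T L * (μ {ω | T L < C ω}).toReal)) :
    ∀ L, 1 ≤ L → T L ≤ ∫ ω, C ω ∂μ := by
  have hEnonneg : 0 ≤ ∫ ω, C ω ∂μ := integral_nonneg hCnonneg
  have key : ∀ t : ℝ, (∫ ω in {ω | C ω ≤ t}, C ω ∂μ)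
      + t * (μ {ω | t < C ω}).toReal ≤ ∫ ω, C ω ∂μ := by
    intro t
    have hs : MeasurableSet {ω | C ω ≤ t} := hCmeas measurableSet_Iic
    have hcompl : {ω | C ω ≤ t}ᶜ = {ω | t < C ω} := by
      ext ω; simp [not_le]
    have hsplit : (∫ ω in {ω | C ω ≤ t}, C ω ∂μ)
        + (∫ ω in {ω | t < C ω}, C ω ∂μ) = ∫ ω, C ω ∂μ := by
      rw [← hcompl]
      exact integral_add_compl hs hCint
    have hmeas2 : MeasurableSet {ω | t < C ω} := by
      rw [← hcompl]; exact hs.compl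
    have hconst : t * (μ {ω | t < C ω}).toReal
        = ∫ _ω in {ω | t < C ω}, t ∂μ := by
      rw [setIntegral_const]; ring_nf; rfl
    have hle : ∫ _ω in {ω | t < C ω}, t ∂μ ≤ ∫ ω in {ω | t < C ω}, C ω ∂μ := by
      apply setIntegral_mono_on (integrableOn_const (measure_lt_top μ _).ne enorm_ne_top)
        hCint.integrableOn hmeas2
      intro ω hω
      exact le_of_lt hω
    linarith
  intro L hL
  induction L with
  | zero => omega
  | succ n ih =>
    rcases Nat.lt_or_ge n 1 with hn | hn
    · interval_cases n
      · simpa [hT1] using hEnonneg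
    · have ihn := ih hn
      rw [hTrec n hn]
      have h1 : (∫ ω in {ω | C ω ≤ T n}, C ω ∂μ)
          + T n * (μ {ω | T n < C ω}).toReal ≤ ∫ ω, C ω ∂μ := key (T n)
      nlinarith [hp.1, hp.2]
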